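/- Let V, Q be finite-dimensional real vector spaces with dim V ≥ 3 and Q an oriented 3-dimensional inner product space, and let R^V : Λ²(V⊗Q) → End(V) and R^Q : Λ²(V⊗Q) → so(Q) be bilinear antisymmetric maps such that R := R^V ⊗ id_Q + id_V ⊗ R^Q satisfies the algebraic first Bianchi identity on V ⊗ Q. Then for any orthonormal frame (J, J', J'') of Q and any S, U ∈ V: R^Q(S⊗J, U⊗J)J = 0, R^Q(S⊗J, U⊗J)J' = 0, and R^Q(S⊗J, U⊗J')J'' = 0. -/

import Mathlib

open TensorProduct Module RealInnerProductSpace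


private lemma extract_aux {V : Type*} [AddCommGroup V] [Module ℝ V] {S U T : V}
    (hT : T ∉ Submodule.span ℝ ({S, U} : Set V))
    {a b c : ℝ} (h : a • T + b • S + c • U = 0) : a = 0 := by
  by_contra ha
  apply hT
  rw [Submodule.mem_span_pair]
  refine ⟨-(a⁻¹ * b), -(a⁻¹ * c), ?_⟩
  have h2 := congrArg (fun v => a⁻¹ • v) h
  simp only [smul_add, smul_smul, inv_mul_cancel₀ ha, one_smul, smul_zero] at h2
  linear_combination (norm := module) -h2

private lemma exists_outside {V : Type*} [AddCommGroup V] [Module ℝ V]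
    [FiniteDimensional ℝ V] (hV : 3 ≤ finrank ℝ V) (S U : V) :
    ∃ T, T ∉ Submodule.span ℝ ({S, U} : Set V) := by
  classical
  by_contra hc
  push_neg at hc
  have htop : Submodule.span ℝ ({S, U} : Set V) = ⊤ := Submodule.eq_top_iff'.mpr hc
  have hcard : ({S, U} : Set V).toFinset.card ≤ 2 := by
    simp only [Set.toFinset_insert, Set.toFinset_singleton]
    exact (Finset.card_insert_le _ _).trans (by simp)
  have h1 : finrank ℝ V ≤ 2 := by
    have h2 := finrank_span_le_card (R := ℝ) ({S, U} : Set V)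
    rw [htop, finrank_top] at h2
    exact h2.trans hcard
  omega

private lemma pair_of_notmem {V : Type*} [AddCommGroup V] [Module ℝ V] {S T : V}
    (hS : S ≠ 0) (hT : T ∉ Submodule.span ℝ ({S, S} : Set V)) :
    LinearIndependent ℝ ![S, T] ∧ LinearIndependent ℝ ![S, S + T] := by
  have key : ∀ a b : ℝ, a • S + b • T = 0 → a = 0 ∧ b = 0 := by
    intro a b hab
    by_cases hb : b = 0
    · refine ⟨?_, hb⟩
      rw [hb, zero_smul, add_zero, smul_eq_zero] at hab
      tauto
    · exfalso
      apply hT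
      rw [Submodule.mem_span_pair]
      refine ⟨-(b⁻¹ * a), 0, ?_⟩
      have h2 := congrArg (fun v => b⁻¹ • v) hab
      simp only [smul_add, smul_smul, inv_mul_cancel₀ hb, one_smul, smul_zero] at h2
      linear_combination (norm := module) -h2
  constructor
  · rw [LinearIndependent.pair_iff]
    exact key
  · rw [LinearIndependent.pair_iff]
    intro a b hab
    have h2 : (a + b) • S + b • T = 0 := by
      linear_combination (norm := module) hab
    obtain ⟨h3, h4⟩ := key _ _ h2
    constructor <;> linarith

private lemma offdiag_to_all {V : Type*} [AddCommGroup V] [Module ℝ V]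
    [FiniteDimensional ℝ V] (hV : 3 ≤ finrank ℝ V) (f : V → V → ℝ)
    (haddR : ∀ S U₁ U₂, f S (U₁ + U₂) = f S U₁ + f S U₂)
    (hsmulL : ∀ (c : ℝ) (S U : V), f (c • S) U = c * f S U)
    (hsmulR : ∀ (c : ℝ) (S U : V), f S (c • U) = c * f S U)
    (hind : ∀ S U, LinearIndependent ℝ ![S, U] → f S U = 0) :
    ∀ S U, f S U = 0 := by
  have h0 : ∀ U, f 0 U = 0 := by
    intro U
    have := hsmulL 0 0 U
    simpa using this
  have hdiag : ∀ S, f S S = 0 := by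
    intro S
    by_cases hS : S = 0
    · rw [hS]; exact h0 0
    · obtain ⟨T, hT⟩ := exists_outside hV S S
      obtain ⟨h1, h2⟩ := pair_of_notmem hS hT
      have e1 : f S (S + T) = 0 := hind _ _ h2
      have e2 : f S T = 0 := hind _ _ h1
      have := haddR S S T
      rw [e1, e2] at this
      linarith
  intro S U
  by_cases h : LinearIndependent ℝ ![S, U]
  · exact hind _ _ h
  · rw [LinearIndependent.pair_iff] at h
    push_neg at h
    obtain ⟨s, t, hst, hne⟩ := h
    by_cases hs : s = 0
    · have ht : t ≠ 0 := by tauto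
      rw [hs, zero_smul, zero_add, smul_eq_zero] at hst
      have hU : U = 0 := by tauto
      rw [hU]
      have := hsmulR 0 S 0
      simpa using this
    · have hSU : S = (-(s⁻¹ * t)) • U := by
        have h2 := congrArg (fun v => s⁻¹ • v) hst
        simp only [smul_add, smul_smul, inv_mul_cancel₀ hs, one_smul, smul_zero] at h2
        linear_combination (norm := module) h2
      rw [hSU, hsmulL, hdiag, mul_zero]

/-- Let `V`, `Q` be finite-dimensional real vector spaces with
`dim V ≥ 3` and `Q` a 3-dimensional inner product space, and let
`R^V : Λ²(V⊗Q) → End(V)` and `R^Q : Λ²(V⊗Q) → so(Q)` be such that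
`R = R^V ⊗ id_Q + id_V ⊗ R^Q` satisfies the algebraic first Bianchi identity on
`V ⊗ Q`. Then for any orthonormal frame `(J, J', J'')` of `Q` and any `S, U ∈ V`:
`R^Q(S⊗J, U⊗J)J = 0`, `R^Q(S⊗J, U⊗J)J' = 0`, and `R^Q(S⊗J, U⊗J')J'' = 0`. -/
theorem RQ_vanishing_from_firstBianchi
    {V : Type*} [AddCommGroup V] [Module ℝ V]
    {Q : Type*} [NormedAddCommGroup Q] [InnerProductSpace ℝ Q]
    [FiniteDimensional ℝ V] [FiniteDimensional ℝ Q]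
    (hV : 3 ≤ finrank ℝ V) (hQ : finrank ℝ Q = 3)
    (RV : (V ⊗[ℝ] Q) →ₗ[ℝ] (V ⊗[ℝ] Q) →ₗ[ℝ] Module.End ℝ V)
    (RQ : (V ⊗[ℝ] Q) →ₗ[ℝ] (V ⊗[ℝ] Q) →ₗ[ℝ] Module.End ℝ Q)
    (hAltV : ∀ t, RV t t = 0) (hAltQ : ∀ t, RQ t t = 0)
    -- `R^Q` takes values in the skew-symmetric endomorphisms of `Q`
    (hskew : ∀ (x y : V ⊗[ℝ] Q) (A : Q), ⟪RQ x y A, A⟫ = 0)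
    -- the algebraic first Bianchi identity for `R = R^V ⊗ id_Q + id_V ⊗ R^Q`
    (Rfull : (V ⊗[ℝ] Q) → (V ⊗[ℝ] Q) → ((V ⊗[ℝ] Q) →ₗ[ℝ] (V ⊗[ℝ] Q)))
    (hRfull : ∀ x y, Rfull x y =
      TensorProduct.map (RV x y) LinearMap.id + TensorProduct.map LinearMap.id (RQ x y))
    (hBianchi : ∀ x y z : V ⊗[ℝ] Q,
      Rfull x y z + Rfull y z x + Rfull z x y = 0) :
    ∀ (J J' J'' : Q) (S U : V),
      ⟪J, J⟫ = 1 → ⟪J', J'⟫ = 1 → ⟪J'', J''⟫ = 1 →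
      ⟪J, J'⟫ = 0 → ⟪J, J''⟫ = 0 → ⟪J', J''⟫ = 0 →
        RQ (S ⊗ₜ J) (U ⊗ₜ J) J = 0 ∧
        RQ (S ⊗ₜ J) (U ⊗ₜ J) J' = 0 ∧
        RQ (S ⊗ₜ J) (U ⊗ₜ J') J'' = 0 := by
  intro J J' J'' S U hJJ hJ'J' hJ''J'' hJJ' hJJ'' hJ'J''
  have hJ'J : ⟪J', J⟫ = 0 := by rw [real_inner_comm]; exact hJJ'
  have hJ''J : ⟪J'', J⟫ = 0 := by rw [real_inner_comm]; exact hJJ''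
  have hJ''J' : ⟪J'', J'⟫ = 0 := by rw [real_inner_comm]; exact hJ'J''
  -- skew polarization
  have hskew' : ∀ (x y : V ⊗[ℝ] Q) (A B : Q), ⟪A, RQ x y B⟫ = -⟪B, RQ x y A⟫ := by
    intro x y A B
    have h := hskew x y (A + B)
    rw [map_add, inner_add_left, inner_add_right, inner_add_right,
      hskew x y A, hskew x y B] at h
    have c1 := real_inner_comm (RQ x y B) A
    have c2 := real_inner_comm (RQ x y A) B
    linarith
  -- projection of the Bianchi identity
  have hproj : ∀ (S U W : V) (A B C D : Q), ⟪D, A⟫ = 0 → ⟪D, B⟫ = 0 → ⟪D, C⟫ = 0 →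
      ⟪D, RQ (S ⊗ₜ A) (U ⊗ₜ B) C⟫ • W + ⟪D, RQ (U ⊗ₜ B) (W ⊗ₜ C) A⟫ • S
        + ⟪D, RQ (W ⊗ₜ C) (S ⊗ₜ A) B⟫ • U = 0 := by
    intro S U W A B C D hDA hDB hDC
    have h := hBianchi (S ⊗ₜ A) (U ⊗ₜ B) (W ⊗ₜ C)
    rw [hRfull, hRfull, hRfull] at h
    set Φ : (V ⊗[ℝ] Q) →ₗ[ℝ] V :=
      (TensorProduct.rid ℝ V).toLinearMap.comp
        (TensorProduct.map LinearMap.id (innerSL ℝ D).toLinearMap) with hΦ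
    have h2 := congrArg Φ h
    simp only [map_add, map_zero, LinearMap.add_apply, TensorProduct.map_tmul,
      LinearMap.id_coe, id_eq, hΦ, LinearMap.coe_comp, Function.comp_apply,
      LinearEquiv.coe_coe, TensorProduct.rid_tmul, ContinuousLinearMap.coe_coe,
      innerSL_apply_apply, hDA, hDB, hDC, zero_smul, zero_add, add_zero] at h2
    -- h2 should be the desired identity (possibly with real_inner as `inner`)
    convert h2 using 2
  -- the master scalar vanishing lemma
  have key : ∀ (A C D : Q), ⟪D, A⟫ = 0 → ⟪D, C⟫ = 0 →
      ∀ S U : V, ⟪D, RQ (S ⊗ₜ A) (U ⊗ₜ A) C⟫ = 0 := by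
    intro A C D hDA hDC
    refine offdiag_to_all hV (fun S U => ⟪D, RQ (S ⊗ₜ A) (U ⊗ₜ A) C⟫) ?_ ?_ ?_ ?_
    · intro S U₁ U₂
      simp [add_tmul, map_add, inner_add_right]
    · intro c S U
      simp [← smul_tmul', map_smul, LinearMap.smul_apply, real_inner_smul_right]
    · intro c S U
      simp [← smul_tmul', map_smul, LinearMap.smul_apply, real_inner_smul_right]
    · intro S U hSU
      obtain ⟨T, hT⟩ := exists_outside hV S U
      exact extract_aux hT (hproj S U T A A C D hDA hDA hDC)
  -- g2 : ⟪J'', RQ (S⊗J) (U⊗J') J⟫ = 0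
  have g2zero : ∀ S U : V, ⟪J'', RQ (S ⊗ₜ J) (U ⊗ₜ J') J⟫ = 0 := by
    refine offdiag_to_all hV (fun S U => ⟪J'', RQ (S ⊗ₜ J) (U ⊗ₜ J') J⟫) ?_ ?_ ?_ ?_
    · intro S U₁ U₂
      simp [add_tmul, map_add, inner_add_right]
    · intro c S U
      simp [← smul_tmul', map_smul, LinearMap.smul_apply, real_inner_smul_right]
    · intro c S U
      simp [← smul_tmul', map_smul, LinearMap.smul_apply, real_inner_smul_right]
    · intro S U hSU
      obtain ⟨T, hT⟩ := exists_outside hV S U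
      have h := hproj T S U J J J' J'' hJ''J hJ''J hJ''J'
      refine extract_aux hT (a := ⟪J'', RQ (S ⊗ₜ J) (U ⊗ₜ J') J⟫)
        (b := ⟪J'', RQ (U ⊗ₜ J') (T ⊗ₜ J) J⟫) (c := ⟪J'', RQ (T ⊗ₜ J) (S ⊗ₜ J) J'⟫) ?_
      linear_combination (norm := module) h
  -- g3 : ⟪J'', RQ (S⊗J) (U⊗J') J'⟫ = 0
  have g3zero : ∀ S U : V, ⟪J'', RQ (S ⊗ₜ J) (U ⊗ₜ J') J'⟫ = 0 := by
    refine offdiag_to_all hV (fun S U => ⟪J'', RQ (S ⊗ₜ J) (U ⊗ₜ J') J'⟫) ?_ ?_ ?_ ?_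
    · intro S U₁ U₂
      simp [add_tmul, map_add, inner_add_right]
    · intro c S U
      simp [← smul_tmul', map_smul, LinearMap.smul_apply, real_inner_smul_right]
    · intro c S U
      simp [← smul_tmul', map_smul, LinearMap.smul_apply, real_inner_smul_right]
    · intro S U hSU
      obtain ⟨T, hT⟩ := exists_outside hV S U
      exact extract_aux hT (hproj S U T J J' J' J'' hJ''J hJ''J' hJ''J')
  -- a vector of Q orthogonal to J, J', J'' is zero
  have hzero : ∀ v : Q, ⟪J, v⟫ = 0 → ⟪J', v⟫ = 0 → ⟪J'', v⟫ = 0 → v = 0 := by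
    intro v h1 h2 h3
    have hon : Orthonormal ℝ ![J, J', J''] := by
      rw [orthonormal_iff_ite]
      intro i j
      fin_cases i <;> fin_cases j <;>
        simp [hJJ, hJ'J', hJ''J'', hJJ', hJJ'', hJ'J'', hJ'J, hJ''J, hJ''J',
          (by rw [norm_eq_sqrt_real_inner, hJJ, Real.sqrt_one] : ‖J‖ = 1),
          (by rw [norm_eq_sqrt_real_inner, hJ'J', Real.sqrt_one] : ‖J'‖ = 1),
          (by rw [norm_eq_sqrt_real_inner, hJ''J'', Real.sqrt_one] : ‖J''‖ = 1)]
    have hli := hon.linearIndependent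
    have hspan : Submodule.span ℝ (Set.range ![J, J', J'']) = ⊤ :=
      hli.span_eq_top_of_card_eq_finrank (by simp [hQ])
    have hall : ∀ w : Q, ⟪w, v⟫ = 0 := by
      intro w
      have hw : w ∈ Submodule.span ℝ (Set.range ![J, J', J'']) := hspan ▸ Submodule.mem_top
      induction hw using Submodule.span_induction with
      | mem x hx =>
        obtain ⟨i, rfl⟩ := hx
        fin_cases i <;> simpa using (by assumption : _)
      | zero => simp
      | add x y _ _ hx hy => rw [inner_add_left, hx, hy, add_zero]
      | smul c x _ hx => rw [real_inner_smul_left, hx, mul_zero]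
    have := hall v
    exact inner_self_eq_zero.mp this
  refine ⟨?_, ?_, ?_⟩
  · apply hzero
    · rw [real_inner_comm]; exact hskew _ _ J
    · exact key J J J' hJ'J hJ'J S U
    · exact key J J J'' hJ''J hJ''J S U
  · apply hzero
    · rw [hskew', key J J J' hJ'J hJ'J S U, neg_zero]
    · rw [real_inner_comm]; exact hskew _ _ J'
    · exact key J J' J'' hJ''J hJ''J' S U
  · apply hzero
    · rw [hskew', g2zero S U, neg_zero]
    · rw [hskew', g3zero S U, neg_zero]
    · rw [real_inner_comm]; exact hskew _ _ J''
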